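/- Classical solutions of Problem 1 are unique: if (u,v) is a classical solution of Problem 1 (the heat–wave system) on [0,T] with zero initial data u₀ = 0, v₀ = 0, v₁ = 0, then u is identically zero on [0,T]×[−1,0] and v is identically zero on [0,T]×[0,1]. Equivalently, two classical solutions of Problem 1 with the same initial data coincide. -/

import Mathlib

open Set Real MeasureTheory intervalIntegral

/-- A classical solution of the heat equation `∂_t u = ∂_x² u` on `[0,T] × [−1,0]`:
`u` is continuous on the closed rectangle, the partial derivatives `ut = ∂_t u`,
`ux = ∂_x u`, `uxx = ∂_x² u` exist and are continuous there, and `∂_t u = ∂_x² u`. -/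
structure IsHeatSol (T : ℝ) (u ut ux uxx : ℝ → ℝ → ℝ) : Prop where
  contu : ContinuousOn (fun p : ℝ × ℝ => u p.1 p.2) (Icc 0 T ×ˢ Icc (-1) 0)
  hut : ∀ t ∈ Icc (0:ℝ) T, ∀ x ∈ Icc (-1:ℝ) 0, HasDerivAt (fun τ => u τ x) (ut t x) t
  hux : ∀ t ∈ Icc (0:ℝ) T, ∀ x ∈ Icc (-1:ℝ) 0, HasDerivAt (fun y => u t y) (ux t x) x
  huxx : ∀ t ∈ Icc (0:ℝ) T, ∀ x ∈ Icc (-1:ℝ) 0, HasDerivAt (fun y => ux t y) (uxx t x) x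
  contut : ContinuousOn (fun p : ℝ × ℝ => ut p.1 p.2) (Icc 0 T ×ˢ Icc (-1) 0)
  contux : ContinuousOn (fun p : ℝ × ℝ => ux p.1 p.2) (Icc 0 T ×ˢ Icc (-1) 0)
  contuxx : ContinuousOn (fun p : ℝ × ℝ => uxx p.1 p.2) (Icc 0 T ×ˢ Icc (-1) 0)
  heat : ∀ t ∈ Icc (0:ℝ) T, ∀ x ∈ Icc (-1:ℝ) 0, ut t x = uxx t x

/-- A classical solution of the wave equation `∂_t² v = ∂_x² v` on `[0,T] × [0,1]`:
`v` is twice continuously differentiable up to the boundary, with first partial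
derivatives `vt`, `vx`, second partial derivatives `vtt`, `vxx` and mixed partial
derivative `vtx`, all continuous on the closed rectangle. -/
structure IsWaveSol (T : ℝ) (v vt vx vtt vtx vxx : ℝ → ℝ → ℝ) : Prop where
  contv : ContinuousOn (fun p : ℝ × ℝ => v p.1 p.2) (Icc 0 T ×ˢ Icc 0 1)
  hvt : ∀ t ∈ Icc (0:ℝ) T, ∀ x ∈ Icc (0:ℝ) 1, HasDerivAt (fun τ => v τ x) (vt t x) t
  hvx : ∀ t ∈ Icc (0:ℝ) T, ∀ x ∈ Icc (0:ℝ) 1, HasDerivAt (fun y => v t y) (vx t x) x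
  hvtt : ∀ t ∈ Icc (0:ℝ) T, ∀ x ∈ Icc (0:ℝ) 1, HasDerivAt (fun τ => vt τ x) (vtt t x) t
  hvtx : ∀ t ∈ Icc (0:ℝ) T, ∀ x ∈ Icc (0:ℝ) 1, HasDerivAt (fun y => vt t y) (vtx t x) x
  hvxt : ∀ t ∈ Icc (0:ℝ) T, ∀ x ∈ Icc (0:ℝ) 1, HasDerivAt (fun τ => vx τ x) (vtx t x) t
  hvxx : ∀ t ∈ Icc (0:ℝ) T, ∀ x ∈ Icc (0:ℝ) 1, HasDerivAt (fun y => vx t y) (vxx t x) x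
  contvt : ContinuousOn (fun p : ℝ × ℝ => vt p.1 p.2) (Icc 0 T ×ˢ Icc 0 1)
  contvx : ContinuousOn (fun p : ℝ × ℝ => vx p.1 p.2) (Icc 0 T ×ˢ Icc 0 1)
  contvtt : ContinuousOn (fun p : ℝ × ℝ => vtt p.1 p.2) (Icc 0 T ×ˢ Icc 0 1)
  contvtx : ContinuousOn (fun p : ℝ × ℝ => vtx p.1 p.2) (Icc 0 T ×ˢ Icc 0 1)
  contvxx : ContinuousOn (fun p : ℝ × ℝ => vxx p.1 p.2) (Icc 0 T ×ˢ Icc 0 1)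
  wave : ∀ t ∈ Icc (0:ℝ) T, ∀ x ∈ Icc (0:ℝ) 1, vtt t x = vxx t x

/-- Problem 1 (the heat–wave system) on `[0,T]` with initial data `u₀, v₀, v₁`:
the heat equation on `[0,T] × [−1,0]` and the wave equation on `[0,T] × [0,1]`,
coupled at the interface `x = 0` by `u(t,0) = ∂_t v(t,0)` (kinematic condition) and
`∂_x u(t,0) = ∂_x v(t,0)` (dynamic condition), with homogeneous boundary conditions
`u(t,−1) = v(t,1) = 0`. -/
structure Problem1 (T : ℝ) (u ut ux uxx v vt vx vtt vtx vxx : ℝ → ℝ → ℝ)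
    (u₀ v₀ v₁ : ℝ → ℝ) : Prop where
  heatSol : IsHeatSol T u ut ux uxx
  waveSol : IsWaveSol T v vt vx vtt vtx vxx
  kinematic : ∀ t ∈ Icc (0:ℝ) T, u t 0 = vt t 0
  dynamic : ∀ t ∈ Icc (0:ℝ) T, ux t 0 = vx t 0
  bdryu : ∀ t ∈ Icc (0:ℝ) T, u t (-1) = 0
  bdryv : ∀ t ∈ Icc (0:ℝ) T, v t 1 = 0
  initu : ∀ x ∈ Icc (-1:ℝ) 0, u 0 x = u₀ x
  initv : ∀ x ∈ Icc (0:ℝ) 1, v 0 x = v₀ x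
  initvt : ∀ x ∈ Icc (0:ℝ) 1, vt 0 x = v₁ x


/-- slice in x -/
private lemma sliceX {F : ℝ → ℝ → ℝ} {c d a b : ℝ}
    (hF : ContinuousOn (fun p : ℝ × ℝ => F p.1 p.2) (Icc c d ×ˢ Icc a b)) {t : ℝ}
    (ht : t ∈ Icc c d) : ContinuousOn (fun x => F t x) (Icc a b) := fun x hx =>
  (hF (t, x) ⟨ht, hx⟩).comp ((continuous_const.prodMk continuous_id).continuousWithinAt)
    (fun y hy => ⟨ht, hy⟩)

private lemma sliceT {F : ℝ → ℝ → ℝ} {c d a b : ℝ}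
    (hF : ContinuousOn (fun p : ℝ × ℝ => F p.1 p.2) (Icc c d ×ˢ Icc a b)) {x : ℝ}
    (hx : x ∈ Icc a b) : ContinuousOn (fun t => F t x) (Icc c d) := by
  intro t ht
  have h1 : ContinuousWithinAt (fun t : ℝ => ((t, x) : ℝ × ℝ)) (Icc c d) t :=
    (continuous_id.prodMk continuous_const).continuousWithinAt
  exact ContinuousWithinAt.comp (f := fun t : ℝ => ((t, x) : ℝ × ℝ))
    (g := fun p : ℝ × ℝ => F p.1 p.2) (hF (t, x) ⟨ht, hx⟩) h1 (fun y hy => ⟨hy, hx⟩)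

private lemma paramCont {F : ℝ → ℝ → ℝ} {c d a b : ℝ} (hab : a ≤ b)
    (hF : ContinuousOn (fun p : ℝ × ℝ => F p.1 p.2) (Icc c d ×ˢ Icc a b)) :
    ContinuousOn (fun t => ∫ x in a..b, F t x) (Icc c d) := by
  obtain ⟨M, hM⟩ := (isCompact_Icc.prod isCompact_Icc).exists_bound_of_continuousOn hF
  have hΙ : uIoc a b ⊆ Icc a b := by rw [uIoc_of_le hab]; exact Ioc_subset_Icc_self
  intro t₀ ht₀
  apply intervalIntegral.continuousWithinAt_of_dominated_interval (bound := fun _ => M)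
  · filter_upwards [self_mem_nhdsWithin] with t ht
    exact (((sliceX hF ht).mono hΙ)).aestronglyMeasurable measurableSet_uIoc
  · filter_upwards [self_mem_nhdsWithin] with t ht
    exact ae_of_all _ fun x hx => hM (t, x) ⟨ht, hΙ hx⟩
  · exact intervalIntegrable_const
  · exact ae_of_all _ fun x hx => (sliceT hF (hΙ hx)) t₀ ht₀

private lemma paramDeriv {F F' : ℝ → ℝ → ℝ} {c d a b : ℝ} (hab : a ≤ b)
    (hF : ContinuousOn (fun p : ℝ × ℝ => F p.1 p.2) (Icc c d ×ˢ Icc a b))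
    (hF' : ContinuousOn (fun p : ℝ × ℝ => F' p.1 p.2) (Icc c d ×ˢ Icc a b))
    (hd : ∀ t ∈ Icc c d, ∀ x ∈ Icc a b, HasDerivAt (fun τ => F τ x) (F' t x) t)
    {t₀ : ℝ} (ht₀ : t₀ ∈ Ioo c d) :
    HasDerivAt (fun t => ∫ x in a..b, F t x) (∫ x in a..b, F' t₀ x) t₀ := by
  obtain ⟨M, hM⟩ := (isCompact_Icc.prod isCompact_Icc).exists_bound_of_continuousOn hF'
  have hΙ : uIoc a b ⊆ Icc a b := by rw [uIoc_of_le hab]; exact Ioc_subset_Icc_self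
  have hεpos : 0 < min (t₀ - c) (d - t₀) := by
    simp only [lt_min_iff]; constructor <;> linarith [ht₀.1, ht₀.2]
  have hball : Metric.ball t₀ (min (t₀ - c) (d - t₀)) ⊆ Icc c d := by
    intro y hy
    rw [Real.ball_eq_Ioo] at hy
    constructor
    · have := hy.1; have : t₀ - min (t₀ - c) (d - t₀) ≥ c := by
        have := min_le_left (t₀ - c) (d - t₀); linarith
      linarith [hy.1]
    · have := min_le_right (t₀ - c) (d - t₀); linarith [hy.2]
  refine (intervalIntegral.hasDerivAt_integral_of_dominated_loc_of_deriv_le (Metric.ball_mem_nhds t₀ hεpos)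
    (bound := fun _ => M) ?_ ?_ ?_ ?_ ?_ ?_).2
  · filter_upwards [Metric.ball_mem_nhds t₀ hεpos] with t ht
    exact ((sliceX hF (hball ht)).mono hΙ).aestronglyMeasurable measurableSet_uIoc
  · exact ((sliceX hF ⟨ht₀.1.le, ht₀.2.le⟩).mono (by rw [uIcc_of_le hab])).intervalIntegrable
  · exact ((sliceX hF' ⟨ht₀.1.le, ht₀.2.le⟩).mono hΙ).aestronglyMeasurable measurableSet_uIoc
  · exact ae_of_all _ fun x hx t ht => hM (t, x) ⟨hball ht, hΙ hx⟩
  · exact intervalIntegrable_const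
  · exact ae_of_all _ fun x hx t ht => hd t (hball ht) x (hΙ hx)

private lemma deriv_zero_of_eqOn {f : ℝ → ℝ} {f' a b x : ℝ} (hab : a < b)
    (hx : x ∈ Icc a b) (hd : HasDerivAt f f' x) (h0 : ∀ y ∈ Icc a b, f y = 0) : f' = 0 := by
  have h1 : HasDerivWithinAt f f' (Icc a b) x := hd.hasDerivWithinAt
  have h2 : HasDerivWithinAt f 0 (Icc a b) x :=
    (hasDerivWithinAt_const x _ (0 : ℝ)).congr h0 (h0 x hx)
  have hu := uniqueDiffOn_Icc hab x hx
  rw [← h1.derivWithin hu, h2.derivWithin hu]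

private lemma zero_of_integral_zero {g : ℝ → ℝ} {a b : ℝ} (hab : a < b)
    (hg : ContinuousOn g (Icc a b)) (hnn : ∀ x ∈ Icc a b, 0 ≤ g x)
    (h : ∫ x in a..b, g x = 0) : ∀ x ∈ Icc a b, g x = 0 := by
  have hgi : IntervalIntegrable g volume a b := (hg.mono (by rw [uIcc_of_le hab.le])).intervalIntegrable
  have hae : 0 ≤ᵐ[volume.restrict (Ioc a b)] g :=
    (ae_restrict_iff' measurableSet_Ioc).mpr
      (ae_of_all _ fun x hx => hnn x (Ioc_subset_Icc_self hx))
  have h0 : g =ᵐ[volume.restrict (Ioc a b)] 0 :=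
    (intervalIntegral.integral_eq_zero_iff_of_le_of_nonneg_ae hab.le hae hgi).mp h
  have h0' : g =ᵐ[volume.restrict (Icc a b)] 0 := by
    rwa [Measure.restrict_congr_set Ioc_ae_eq_Icc] at h0
  exact fun x hx => Measure.eqOn_Icc_of_ae_eq volume hab.ne h0' hg continuousOn_const hx


/-- Uniqueness for Problem 1: a classical solution `(u,v)` of the
heat–wave system on `[0,T]` with zero initial data vanishes identically. -/
theorem problem1_uniqueness (T : ℝ) (hT : 0 ≤ T)
    (u ut ux uxx v vt vx vtt vtx vxx : ℝ → ℝ → ℝ)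
    (hP : Problem1 T u ut ux uxx v vt vx vtt vtx vxx
      (fun _ => 0) (fun _ => 0) (fun _ => 0)) :
    (∀ t ∈ Icc (0:ℝ) T, ∀ x ∈ Icc (-1:ℝ) 0, u t x = 0) ∧
    (∀ t ∈ Icc (0:ℝ) T, ∀ x ∈ Icc (0:ℝ) 1, v t x = 0) := by
  obtain ⟨hH, hW, hkin, hdyn, hbu, hbv, hiu, hiv, hivt⟩ := hP
  have h10 : (-1:ℝ) ≤ 0 := by norm_num
  have h01 : (0:ℝ) ≤ 1 := by norm_num
  have h0T : (0:ℝ) ∈ Icc (0:ℝ) T := ⟨le_rfl, hT⟩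
  set E : ℝ → ℝ := fun t => (∫ x in (-1:ℝ)..0, u t x * u t x) +
    ∫ x in (0:ℝ)..1, (vt t x * vt t x + vx t x * vx t x) with hEdef
  have hcontF1 : ContinuousOn (fun p : ℝ × ℝ => u p.1 p.2 * u p.1 p.2)
      (Icc 0 T ×ˢ Icc (-1) 0) := hH.contu.mul hH.contu
  have hcontF2 : ContinuousOn
      (fun p : ℝ × ℝ => vt p.1 p.2 * vt p.1 p.2 + vx p.1 p.2 * vx p.1 p.2)
      (Icc 0 T ×ˢ Icc 0 1) := (hW.contvt.mul hW.contvt).add (hW.contvx.mul hW.contvx)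
  have hEcont : ContinuousOn E (Icc 0 T) :=
    (paramCont h10 hcontF1).add (paramCont h01 hcontF2)
  -- derivative of E on the interior
  have hEderiv : ∀ t ∈ Ioo (0:ℝ) T, HasDerivAt E
      ((∫ x in (-1:ℝ)..0, (ut t x * u t x + u t x * ut t x)) +
        ∫ x in (0:ℝ)..1, ((vtt t x * vt t x + vt t x * vtt t x) +
          (vtx t x * vx t x + vx t x * vtx t x))) t := by
    intro t ht
    have h1 := paramDeriv h10 hcontF1
      ((hH.contut.mul hH.contu).add (hH.contu.mul hH.contut))
      (fun τ hτ x hx => (hH.hut τ hτ x hx).mul (hH.hut τ hτ x hx)) ht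
    have h2 := paramDeriv h01 hcontF2
      (((hW.contvtt.mul hW.contvt).add (hW.contvt.mul hW.contvtt)).add
        ((hW.contvtx.mul hW.contvx).add (hW.contvx.mul hW.contvtx)))
      (fun τ hτ x hx => ((hW.hvtt τ hτ x hx).mul (hW.hvtt τ hτ x hx)).add
        ((hW.hvxt τ hτ x hx).mul (hW.hvxt τ hτ x hx))) ht
    exact h1.add h2
  -- the derivative is nonpositive
  have hDle : ∀ t ∈ Ioo (0:ℝ) T,
      ((∫ x in (-1:ℝ)..0, (ut t x * u t x + u t x * ut t x)) +
        ∫ x in (0:ℝ)..1, ((vtt t x * vt t x + vt t x * vtt t x) +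
          (vtx t x * vx t x + vx t x * vtx t x))) ≤ 0 := by
    intro t ht
    have ht' : t ∈ Icc (0:ℝ) T := ⟨ht.1.le, ht.2.le⟩
    have hTpos : (0:ℝ) < T := lt_trans ht.1 ht.2
    have hIu : ∫ x in (-1:ℝ)..0, (ut t x * u t x + u t x * ut t x) =
        2 * ∫ x in (-1:ℝ)..0, u t x * uxx t x := by
      rw [← intervalIntegral.integral_const_mul]
      apply intervalIntegral.integral_congr
      intro x hx
      rw [uIcc_of_le h10] at hx
      have hh := hH.heat t ht' x hx
      simp only [hh]; ring
    have hIBP : ∫ x in (-1:ℝ)..0, u t x * uxx t x =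
        u t 0 * ux t 0 - u t (-1) * ux t (-1) - ∫ x in (-1:ℝ)..0, ux t x * ux t x := by
      apply intervalIntegral.integral_mul_deriv_eq_deriv_mul
      · intro x hx; rw [uIcc_of_le h10] at hx; exact hH.hux t ht' x hx
      · intro x hx; rw [uIcc_of_le h10] at hx; exact hH.huxx t ht' x hx
      · exact ((sliceX hH.contux ht').mono (by rw [uIcc_of_le h10])).intervalIntegrable
      · exact ((sliceX hH.contuxx ht').mono (by rw [uIcc_of_le h10])).intervalIntegrable
    have hIv : ∫ x in (0:ℝ)..1, ((vtt t x * vt t x + vt t x * vtt t x) +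
          (vtx t x * vx t x + vx t x * vtx t x)) =
        2 * ∫ x in (0:ℝ)..1, (vtx t x * vx t x + vt t x * vxx t x) := by
      rw [← intervalIntegral.integral_const_mul]
      apply intervalIntegral.integral_congr
      intro x hx
      rw [uIcc_of_le h01] at hx
      have hh := hW.wave t ht' x hx
      simp only [hh]; ring
    have hFTC : ∫ x in (0:ℝ)..1, (vtx t x * vx t x + vt t x * vxx t x) =
        vt t 1 * vx t 1 - vt t 0 * vx t 0 := by
      apply intervalIntegral.integral_eq_sub_of_hasDerivAt
        (f := fun x => vt t x * vx t x)
      · intro x hx; rw [uIcc_of_le h01] at hx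
        exact (hW.hvtx t ht' x hx).mul (hW.hvxx t ht' x hx)
      · apply ContinuousOn.intervalIntegrable
        have := ((sliceX hW.contvtx ht').mul (sliceX hW.contvx ht')).add
          ((sliceX hW.contvt ht').mul (sliceX hW.contvxx ht'))
        exact this.mono (by rw [uIcc_of_le h01])
    have hvt1 : vt t 1 = 0 :=
      deriv_zero_of_eqOn hTpos ht' (hW.hvt t ht' 1 ⟨h01, le_rfl⟩) (fun τ hτ => hbv τ hτ)
    have hu1 : u t (-1) = 0 := hbu t ht'
    have hk : u t 0 = vt t 0 := hkin t ht'
    have hd : ux t 0 = vx t 0 := hdyn t ht'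
    have hnn : 0 ≤ ∫ x in (-1:ℝ)..0, ux t x * ux t x :=
      intervalIntegral.integral_nonneg h10 (fun x _ => mul_self_nonneg _)
    rw [hIu, hIBP, hIv, hFTC, hvt1, hu1, hk, hd]
    have key : (2:ℝ) * (vt t 0 * vx t 0 - 0 * ux t (-1) - ∫ x in (-1:ℝ)..0, ux t x * ux t x)
        + 2 * (0 * vx t 1 - vt t 0 * vx t 0)
        = -2 * ∫ x in (-1:ℝ)..0, ux t x * ux t x := by ring
    rw [key]; linarith
  have hanti : AntitoneOn E (Icc 0 T) := by
    apply antitoneOn_of_deriv_nonpos (convex_Icc 0 T) hEcont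
    · intro t ht; rw [interior_Icc] at ht
      exact (hEderiv t ht).differentiableAt.differentiableWithinAt
    · intro t ht; rw [interior_Icc] at ht
      rw [(hEderiv t ht).deriv]; exact hDle t ht
  -- E 0 = 0
  have hvx0 : ∀ x ∈ Icc (0:ℝ) 1, vx 0 x = 0 := fun x hx =>
    deriv_zero_of_eqOn zero_lt_one hx (hW.hvx 0 h0T x hx) (fun y hy => hiv y hy)
  have hE0 : E 0 = 0 := by
    have e1 : ∫ x in (-1:ℝ)..0, u 0 x * u 0 x = 0 := by
      rw [intervalIntegral.integral_congr (g := fun _ => (0:ℝ)), intervalIntegral.integral_zero]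
      intro x hx; rw [uIcc_of_le h10] at hx
      simp [hiu x hx]
    have e2 : ∫ x in (0:ℝ)..1, (vt 0 x * vt 0 x + vx 0 x * vx 0 x) = 0 := by
      rw [intervalIntegral.integral_congr (g := fun _ => (0:ℝ)), intervalIntegral.integral_zero]
      intro x hx; rw [uIcc_of_le h01] at hx
      simp [hivt x hx, hvx0 x hx]
    show (∫ x in (-1:ℝ)..0, u 0 x * u 0 x) +
      (∫ x in (0:ℝ)..1, (vt 0 x * vt 0 x + vx 0 x * vx 0 x)) = 0
    rw [e1, e2]; norm_num
  -- E vanishes, hence both integrals vanish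
  have hEzero : ∀ t ∈ Icc (0:ℝ) T,
      (∫ x in (-1:ℝ)..0, u t x * u t x) = 0 ∧
      (∫ x in (0:ℝ)..1, (vt t x * vt t x + vx t x * vx t x)) = 0 := by
    intro t ht
    have hle0 : E t ≤ E 0 := hanti h0T ht ht.1
    rw [hE0] at hle0
    have hle : (∫ x in (-1:ℝ)..0, u t x * u t x) +
      (∫ x in (0:ℝ)..1, (vt t x * vt t x + vx t x * vx t x)) ≤ 0 := hle0
    have n1 : 0 ≤ ∫ x in (-1:ℝ)..0, u t x * u t x :=
      intervalIntegral.integral_nonneg h10 (fun x _ => mul_self_nonneg _)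
    have n2 : 0 ≤ ∫ x in (0:ℝ)..1, (vt t x * vt t x + vx t x * vx t x) :=
      intervalIntegral.integral_nonneg h01
        (fun x _ => add_nonneg (mul_self_nonneg _) (mul_self_nonneg _))
    constructor <;> linarith
  -- u vanishes
  have hu0 : ∀ t ∈ Icc (0:ℝ) T, ∀ x ∈ Icc (-1:ℝ) 0, u t x = 0 := by
    intro t ht x hx
    have := zero_of_integral_zero (g := fun x => u t x * u t x) neg_one_lt_zero
      (sliceX (F := fun t x => u t x * u t x) hcontF1 ht) (fun y _ => mul_self_nonneg _) (hEzero t ht).1 x hx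
    exact mul_self_eq_zero.mp this
  -- vx vanishes
  have hvxz : ∀ t ∈ Icc (0:ℝ) T, ∀ x ∈ Icc (0:ℝ) 1, vx t x = 0 := by
    intro t ht x hx
    have h := zero_of_integral_zero
      (g := fun x => vt t x * vt t x + vx t x * vx t x) zero_lt_one
      (sliceX (F := fun t x => vt t x * vt t x + vx t x * vx t x) hcontF2 ht)
      (fun y _ => add_nonneg (mul_self_nonneg _) (mul_self_nonneg _))
      (hEzero t ht).2 x hx
    have h' : vt t x * vt t x + vx t x * vx t x = 0 := h
    have h1 := mul_self_nonneg (vt t x)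
    have h2 := mul_self_nonneg (vx t x)
    have : vx t x * vx t x = 0 := by linarith [h']
    exact mul_self_eq_zero.mp this
  refine ⟨hu0, ?_⟩
  intro t ht x hx
  have hsub : uIcc x 1 ⊆ Icc (0:ℝ) 1 := by
    rw [uIcc_of_le hx.2]; exact Icc_subset_Icc hx.1 le_rfl
  have hftc : ∫ y in x..(1:ℝ), vx t y = v t 1 - v t x := by
    apply intervalIntegral.integral_eq_sub_of_hasDerivAt
    · intro y hy; exact hW.hvx t ht y (hsub hy)
    · exact ((sliceX hW.contvx ht).mono hsub).intervalIntegrable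
  have hzero : ∫ y in x..(1:ℝ), vx t y = 0 := by
    rw [intervalIntegral.integral_congr (g := fun _ => (0:ℝ)), intervalIntegral.integral_zero]
    intro y hy; exact hvxz t ht y (hsub hy)
  have hb := hbv t ht
  rw [hzero, hb] at hftc
  linarith
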